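/- Let φ be a reduced Boolean formula defining a nonempty set S ⊆ {0,1}^n and let Q ⊆ [0,1]^n be a convex set containing S. Then φ^n(Q) = conv(S), where φ^1(Q) := φ(Q) and φ^{ℓ+1}(Q) := φ(φ^ℓ(Q)). -/

import Mathlib

/-- Reduced Boolean formulas: literals combined with `∧` and `∨`. -/
inductive Fml (n : ℕ) : Type
  | pos : Fin n → Fml n
  | neg : Fin n → Fml n
  | and : Fml n → Fml n → Fml n
  | or  : Fml n → Fml n → Fml n

namespace Fml

/-- Evaluation of a reduced formula on a (0/1-valued) real point. -/
def eval {n : ℕ} : Fml n → (Fin n → ℝ) → Prop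
  | pos i, x => x i = 1
  | neg i, x => x i = 0
  | and φ ψ, x => φ.eval x ∧ ψ.eval x
  | or φ ψ, x => φ.eval x ∨ ψ.eval x

/-- The set `φ(Q)` obtained by feeding the convex set `Q` into the formula `φ`. -/
def app {n : ℕ} : Fml n → Set (Fin n → ℝ) → Set (Fin n → ℝ)
  | pos i, Q => {x ∈ Q | x i = 1}
  | neg i, Q => {x ∈ Q | x i = 0}
  | and φ ψ, Q => φ.app Q ∩ ψ.app Q
  | or φ ψ, Q => convexHull ℝ (φ.app Q ∪ ψ.app Q)

/-- Iterated application: `φ^0(Q) = Q` and `φ^{ℓ+1}(Q) = φ(φ^ℓ(Q))`. -/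
def iterApp {n : ℕ} (φ : Fml n) : ℕ → Set (Fin n → ℝ) → Set (Fin n → ℝ)
  | 0, Q => Q
  | k + 1, Q => φ.app (φ.iterApp k Q)

end Fml

/-- The 0/1 points of the cube. -/
def CubeVerts (n : ℕ) : Set (Fin n → ℝ) := {x | ∀ i, x i = 0 ∨ x i = 1}

section Stmt6Aux

open Fml

variable {n : ℕ}

private lemma fml_zero_false (φ : Fml 0) : False := by
  induction φ with
  | pos i => exact i.elim0
  | neg i => exact i.elim0
  | and a b iha ihb => exact iha
  | or a b iha ihb => exact iha

/-- The cube, described coordinatewise. -/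
def CubeP (n : ℕ) : Set (Fin n → ℝ) := {x | ∀ i, 0 ≤ x i ∧ x i ≤ 1}

lemma convex_CubeP : Convex ℝ (CubeP n) := by
  intro x hx y hy a b ha hb hab i
  have h1 := hx i; have h2 := hy i
  simp only [Pi.add_apply, Pi.smul_apply, smul_eq_mul]
  constructor
  · nlinarith [h1.1, h2.1]
  · nlinarith [h1.2, h2.2]

/-- Real value of a boolean. -/
def bval (b : Bool) : ℝ := if b then 1 else 0

@[simp] lemma bval_true : bval true = 1 := rfl
@[simp] lemma bval_false : bval false = 0 := rfl

lemma bval_nonneg (b : Bool) : 0 ≤ bval b := by cases b <;> norm_num [bval]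
lemma bval_le_one (b : Bool) : bval b ≤ 1 := by cases b <;> norm_num [bval]
lemma bval_01 (b : Bool) : bval b = 0 ∨ bval b = 1 := by cases b <;> simp

/-- The face of the cube determined by a partial 0/1-assignment. -/
def Face (σ : Fin n → Option Bool) : Set (Fin n → ℝ) :=
  {x | x ∈ CubeP n ∧ ∀ i b, σ i = some b → x i = bval b}

lemma convex_Face (σ : Fin n → Option Bool) : Convex ℝ (Face σ) := by
  intro x hx y hy a b ha hb hab
  refine ⟨convex_CubeP hx.1 hy.1 ha hb hab, ?_⟩
  intro i bb h
  simp only [Pi.add_apply, Pi.smul_apply, smul_eq_mul, hx.2 i bb h, hy.2 i bb h]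
  rw [← add_mul, hab, one_mul]

lemma app_subset_convex {C R : Set (Fin n → ℝ)} (hC : Convex ℝ C) (hRC : R ⊆ C)
    (ψ : Fml n) : ψ.app R ⊆ C := by
  induction ψ with
  | pos i => exact fun x hx => hRC hx.1
  | neg i => exact fun x hx => hRC hx.1
  | and ψ₁ ψ₂ ih₁ ih₂ => exact fun x hx => ih₁ hx.1
  | or ψ₁ ψ₂ ih₁ ih₂ => exact convexHull_min (Set.union_subset ih₁ ih₂) hC

lemma eval_mem_app {R : Set (Fin n → ℝ)} {s : Fin n → ℝ} (ψ : Fml n)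
    (hs : s ∈ R) (he : ψ.eval s) : s ∈ ψ.app R := by
  induction ψ with
  | pos i => exact ⟨hs, he⟩
  | neg i => exact ⟨hs, he⟩
  | and ψ₁ ψ₂ ih₁ ih₂ => exact ⟨ih₁ he.1, ih₂ he.2⟩
  | or ψ₁ ψ₂ ih₁ ih₂ =>
    rcases he with h | h
    · exact subset_convexHull ℝ _ (Or.inl (ih₁ h))
    · exact subset_convexHull ℝ _ (Or.inr (ih₂ h))

lemma convex_coord (i : Fin n) (r : ℝ) : Convex ℝ {x : Fin n → ℝ | x i = r} := by
  intro x hx y hy a b ha hb hab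
  simp only [Set.mem_setOf_eq] at *
  simp only [Pi.add_apply, Pi.smul_apply, smul_eq_mul, hx, hy]
  rw [← add_mul, hab, one_mul]

lemma app_convex {R : Set (Fin n → ℝ)} (hR : Convex ℝ R) (ψ : Fml n) :
    Convex ℝ (ψ.app R) := by
  induction ψ with
  | pos i => exact hR.inter (convex_coord i 1)
  | neg i => exact hR.inter (convex_coord i 0)
  | and ψ₁ ψ₂ ih₁ ih₂ => exact ih₁.inter ih₂
  | or ψ₁ ψ₂ ih₁ ih₂ => exact convex_convexHull ℝ _

lemma iter_subset_convex {C Q : Set (Fin n → ℝ)} (hC : Convex ℝ C) (hQC : Q ⊆ C)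
    (φ : Fml n) (k : ℕ) : φ.iterApp k Q ⊆ C := by
  induction k with
  | zero => exact hQC
  | succ k ih => exact app_subset_convex hC ih φ

lemma iter_convex {Q : Set (Fin n → ℝ)} (hQ : Convex ℝ Q) (φ : Fml n) (k : ℕ) :
    Convex ℝ (φ.iterApp k Q) := by
  induction k with
  | zero => exact hQ
  | succ k ih => exact app_convex ih φ

lemma S_subset_iter {Q S : Set (Fin n → ℝ)} (φ : Fml n) (hSQ : S ⊆ Q)
    (hev : ∀ s ∈ S, φ.eval s) (k : ℕ) : S ⊆ φ.iterApp k Q := by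
  induction k with
  | zero => exact hSQ
  | succ k ih => exact fun s hs => eval_mem_app φ (ih hs) (hev s hs)

/-- Key geometric fact: a point of a face which is in the convex hull of a set of points of
the cube is in the convex hull of the part of the set lying in the face. -/
lemma mem_convexHull_inter_face {A : Set (Fin n → ℝ)} {σ : Fin n → Option Bool}
    {x : Fin n → ℝ} (hA : A ⊆ CubeP n) (hx : x ∈ convexHull ℝ A) (hxF : x ∈ Face σ) :
    x ∈ convexHull ℝ (A ∩ Face σ) := by
  classical
  rw [convexHull_eq] at hx
  obtain ⟨ι, t, w, z, hw0, hw1, hz, hcm⟩ := hx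
  have hxj : ∀ j, x j = ∑ i ∈ t, w i * z i j := by
    intro j
    rw [← hcm, Finset.centerMass_eq_of_sum_1 _ _ hw1]
    simp [Finset.sum_apply]
  have key : ∀ i ∈ t, w i ≠ 0 → z i ∈ Face σ := by
    intro i hi hwi
    refine ⟨hA (hz i hi), ?_⟩
    intro j bb hj
    have hxjv : x j = bval bb := hxF.2 j bb hj
    rcases bval_01 bb with h0 | h1
    · have hsum : ∑ k ∈ t, w k * z k j = 0 := by rw [← hxj, hxjv, h0]
      have hterm : ∀ k ∈ t, 0 ≤ w k * z k j := fun k hk =>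
        mul_nonneg (hw0 k hk) ((hA (hz k hk) j).1)
      have h := (Finset.sum_eq_zero_iff_of_nonneg hterm).mp hsum i hi
      rcases mul_eq_zero.mp h with h' | h'
      · exact absurd h' hwi
      · rw [h0, h']
    · have hsum : ∑ k ∈ t, w k * (1 - z k j) = 0 := by
        have he : ∑ k ∈ t, w k * (1 - z k j)
            = (∑ k ∈ t, w k) - ∑ k ∈ t, w k * z k j := by
          rw [← Finset.sum_sub_distrib]
          apply Finset.sum_congr rfl
          intros; ring
        rw [he, hw1, ← hxj, hxjv, h1]; ring
      have hterm : ∀ k ∈ t, 0 ≤ w k * (1 - z k j) := fun k hk =>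
        mul_nonneg (hw0 k hk) (by linarith [(hA (hz k hk) j).2])
      have h := (Finset.sum_eq_zero_iff_of_nonneg hterm).mp hsum i hi
      rcases mul_eq_zero.mp h with h' | h'
      · exact absurd h' hwi
      · rw [h1]; linarith
  have hfilter : ({i ∈ t | w i ≠ 0} : Finset ι).centerMass w z = x := by
    rw [Finset.centerMass_filter_ne_zero]; exact hcm
  rw [← hfilter]
  apply Finset.centerMass_mem_convexHull
  · exact fun i hi => hw0 i (Finset.mem_filter.mp hi).1
  · have : ∑ i ∈ ({i ∈ t | w i ≠ 0} : Finset ι), w i = 1 := by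
      rw [Finset.sum_filter_ne_zero]; exact hw1
    rw [this]; norm_num
  · intro i hi
    obtain ⟨hit, hwne⟩ := Finset.mem_filter.mp hi
    exact ⟨hz i hit, key i hit hwne⟩

/-- The free coordinates of a partial assignment. -/
def freeS (σ : Fin n → Option Bool) : Finset (Fin n) :=
  Finset.univ.filter (fun i => σ i = none)

lemma freeS_update (σ : Fin n → Option Bool) (i : Fin n) (b : Bool) :
    freeS (Function.update σ i (some b)) = (freeS σ).erase i := by
  ext j
  simp only [freeS, Finset.mem_filter, Finset.mem_univ, true_and, Finset.mem_erase,
    Function.update_apply]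
  by_cases h : j = i <;> simp [h]

lemma face_update_subset {σ : Fin n → Option Bool} {i : Fin n} (hi : σ i = none) (b : Bool) :
    Face (Function.update σ i (some b)) ⊆ Face σ := by
  rintro y ⟨hyC, hyfix⟩
  refine ⟨hyC, fun j bb hj => ?_⟩
  have hji : j ≠ i := by rintro rfl; rw [hi] at hj; exact nomatch hj
  exact hyfix j bb (by rw [Function.update_of_ne hji]; exact hj)

/-- A face of the cube is contained in the convex hull of its 0/1 vertices. -/
lemma face_hull_aux : ∀ (d : ℕ) (σ : Fin n → Option Bool), (freeS σ).card = d →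
    Face σ ⊆ convexHull ℝ (Face σ ∩ CubeVerts n) := by
  intro d
  induction d with
  | zero =>
    intro σ hcard x hx
    apply subset_convexHull
    refine ⟨hx, ?_⟩
    intro i
    have hne : σ i ≠ none := by
      intro h
      have : i ∈ freeS σ := by simp [freeS, h]
      rw [Finset.card_eq_zero.mp hcard] at this
      exact absurd this (Finset.notMem_empty i)
    obtain ⟨b, hb⟩ := Option.ne_none_iff_exists'.mp hne
    rw [hx.2 i b hb]; exact bval_01 b
  | succ d ih =>
    intro σ hcard x hx
    have hne : (freeS σ).Nonempty := by rw [← Finset.card_pos, hcard]; omega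
    obtain ⟨i, hi⟩ := hne
    have hiσ : σ i = none := by simpa [freeS] using hi
    have hxb : ∀ b : Bool, Function.update x i (bval b) ∈ Face (Function.update σ i (some b)) := by
      intro b
      constructor
      · intro k
        rcases eq_or_ne k i with rfl | hk
        · simp only [Function.update_self]
          exact ⟨bval_nonneg b, bval_le_one b⟩
        · rw [Function.update_of_ne hk]; exact hx.1 k
      · intro k bb hk
        rcases eq_or_ne k i with rfl | hk'
        · rw [Function.update_self] at hk
          injection hk with h; subst h
          simp
        · rw [Function.update_of_ne hk'] at hk
          rw [Function.update_of_ne hk']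
          exact hx.2 k bb hk
    have hcard' : ∀ b : Bool, (freeS (Function.update σ i (some b))).card = d := by
      intro b
      rw [freeS_update, Finset.card_erase_of_mem hi, hcard]; omega
    have hmem : ∀ b : Bool,
        Function.update x i (bval b) ∈ convexHull ℝ (Face σ ∩ CubeVerts n) := by
      intro b
      have h1 := ih _ (hcard' b) (hxb b)
      refine convexHull_mono ?_ h1
      exact fun y hy => ⟨face_update_subset hiσ b hy.1, hy.2⟩
    have hxeq : x = (1 - x i) • Function.update x i (bval false)
        + (x i) • Function.update x i (bval true) := by
      funext k
      simp only [Pi.add_apply, Pi.smul_apply, smul_eq_mul]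
      rcases eq_or_ne k i with rfl | hk
      · simp only [Function.update_self, bval_true, bval_false]; ring
      · rw [Function.update_of_ne hk, Function.update_of_ne hk]; ring
    rw [hxeq]
    exact (convex_convexHull ℝ _) (hmem false) (hmem true)
      (by linarith [(hx.1 i).2]) (hx.1 i).1 (by ring)

/-- The partial assignment forces a formula to be true. -/
def Forced : Fml n → (Fin n → Option Bool) → Prop
  | .pos i, σ => σ i = some true
  | .neg i, σ => σ i = some false
  | .and φ ψ, σ => Forced φ σ ∧ Forced ψ σ
  | .or φ ψ, σ => Forced φ σ ∨ Forced ψ σ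

lemma forced_eval {σ : Fin n → Option Bool} {x : Fin n → ℝ} (hx : x ∈ Face σ) :
    ∀ {ψ : Fml n}, Forced ψ σ → ψ.eval x := by
  intro ψ
  induction ψ with
  | pos i => exact fun h => by simpa [Fml.eval] using hx.2 i true h
  | neg i => exact fun h => by simpa [Fml.eval] using hx.2 i false h
  | and ψ₁ ψ₂ ih₁ ih₂ => exact fun h => ⟨ih₁ h.1, ih₂ h.2⟩
  | or ψ₁ ψ₂ ih₁ ih₂ => exact fun h => h.elim (fun h => Or.inl (ih₁ h)) (fun h => Or.inr (ih₂ h))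

/-- Inner structural lemma: if `ψ` is not forced true on the face, then every point of
`ψ.app R` on the face is a convex combination of points of `R` on the face having some
additional integral free coordinate. -/
lemma inner_lemma {σ : Fin n → Option Bool} {R : Set (Fin n → ℝ)} (hR : R ⊆ CubeP n) :
    ∀ {ψ : Fml n}, ¬ Forced ψ σ →
      ψ.app R ∩ Face σ ⊆
        convexHull ℝ {y | (y ∈ R ∧ y ∈ Face σ) ∧ ∃ i, σ i = none ∧ (y i = 0 ∨ y i = 1)} := by
  intro ψ
  induction ψ with
  | pos i =>
    rintro hF x ⟨⟨hxR, hxi⟩, hxF⟩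
    rcases hσ : σ i with _ | b
    · exact subset_convexHull ℝ _ ⟨⟨hxR, hxF⟩, i, hσ, Or.inr hxi⟩
    · cases b
      · have h := hxF.2 i false hσ
        rw [hxi] at h; norm_num at h
      · exact absurd hσ hF
  | neg i =>
    rintro hF x ⟨⟨hxR, hxi⟩, hxF⟩
    rcases hσ : σ i with _ | b
    · exact subset_convexHull ℝ _ ⟨⟨hxR, hxF⟩, i, hσ, Or.inl hxi⟩
    · cases b
      · exact absurd hσ hF
      · have h := hxF.2 i true hσ
        rw [hxi] at h; norm_num at h
  | and ψ₁ ψ₂ ih₁ ih₂ =>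
    intro hF
    by_cases h1 : Forced ψ₁ σ
    · have h2 : ¬ Forced ψ₂ σ := fun h2 => hF ⟨h1, h2⟩
      exact fun x hx => ih₂ h2 ⟨hx.1.2, hx.2⟩
    · exact fun x hx => ih₁ h1 ⟨hx.1.1, hx.2⟩
  | or ψ₁ ψ₂ ih₁ ih₂ =>
    intro hF
    have h1 : ¬ Forced ψ₁ σ := fun h => hF (Or.inl h)
    have h2 : ¬ Forced ψ₂ σ := fun h => hF (Or.inr h)
    rintro x ⟨hx, hxF⟩
    have hAB : ψ₁.app R ∪ ψ₂.app R ⊆ CubeP n :=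
      Set.union_subset (app_subset_convex convex_CubeP hR ψ₁)
        (app_subset_convex convex_CubeP hR ψ₂)
    have hx2 := mem_convexHull_inter_face hAB hx hxF
    rw [Set.union_inter_distrib_right] at hx2
    refine convexHull_min ?_ (convex_convexHull ℝ _) hx2
    exact Set.union_subset (fun y hy => ih₁ h1 hy) (fun y hy => ih₂ h2 hy)

/-- One-dimensional analysis: on an edge of the cube with endpoints `u, v`,
points of `ψ.app T` on the edge are controlled by the evaluations at the endpoints. -/
lemma oneD {σ : Fin n → Option Bool} {j : Fin n}
    (hone : ∀ i, i ≠ j → σ i ≠ none)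
    {u v : Fin n → ℝ} (huF : u ∈ Face σ) (hvF : v ∈ Face σ)
    (huj : u j = 0) (hvj : v j = 1) (huv : u ≠ v)
    (hequ : ∀ x ∈ Face σ, x j = 0 → x = u) (heqv : ∀ x ∈ Face σ, x j = 1 → x = v)
    {T : Set (Fin n → ℝ)} (hT : T ⊆ CubeP n) :
    ∀ ψ : Fml n, ψ.app T ∩ Face σ ⊆
      {x | x ∈ Face σ ∧ ((ψ.eval u ∧ ψ.eval v) ∨ (ψ.eval u ∧ x = u) ∨ (ψ.eval v ∧ x = v))} := by
  intro ψ
  induction ψ with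
  | pos i =>
    rintro x ⟨⟨hxT, hxi⟩, hxF⟩
    refine ⟨hxF, ?_⟩
    by_cases hij : i = j
    · subst hij
      have hxv : x = v := heqv x hxF hxi
      exact Or.inr (Or.inr ⟨hvj, hxv⟩)
    · obtain ⟨b, hb⟩ := Option.ne_none_iff_exists'.mp (hone i hij)
      cases b
      · exfalso
        have h := hxF.2 i false hb
        rw [hxi] at h; norm_num at h
      · refine Or.inl ⟨?_, ?_⟩
        · show u i = 1
          rw [huF.2 i true hb]; rfl
        · show v i = 1
          rw [hvF.2 i true hb]; rfl
  | neg i =>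
    rintro x ⟨⟨hxT, hxi⟩, hxF⟩
    refine ⟨hxF, ?_⟩
    by_cases hij : i = j
    · subst hij
      have hxu : x = u := hequ x hxF hxi
      exact Or.inr (Or.inl ⟨huj, hxu⟩)
    · obtain ⟨b, hb⟩ := Option.ne_none_iff_exists'.mp (hone i hij)
      cases b
      · refine Or.inl ⟨?_, ?_⟩
        · show u i = 0
          rw [huF.2 i false hb]; rfl
        · show v i = 0
          rw [hvF.2 i false hb]; rfl
      · exfalso
        have h := hxF.2 i true hb
        rw [hxi] at h; norm_num at h
  | and ψ₁ ψ₂ ih₁ ih₂ =>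
    rintro x ⟨⟨hx1, hx2⟩, hxF⟩
    obtain ⟨-, d₁⟩ := ih₁ ⟨hx1, hxF⟩
    obtain ⟨-, d₂⟩ := ih₂ ⟨hx2, hxF⟩
    refine ⟨hxF, ?_⟩
    rcases d₁ with ⟨e1u, e1v⟩ | ⟨e1u, hxu⟩ | ⟨e1v, hxv⟩ <;>
      rcases d₂ with ⟨e2u, e2v⟩ | ⟨e2u, hxu'⟩ | ⟨e2v, hxv'⟩
    · exact Or.inl ⟨⟨e1u, e2u⟩, e1v, e2v⟩
    · exact Or.inr (Or.inl ⟨⟨e1u, e2u⟩, hxu'⟩)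
    · exact Or.inr (Or.inr ⟨⟨e1v, e2v⟩, hxv'⟩)
    · exact Or.inr (Or.inl ⟨⟨e1u, e2u⟩, hxu⟩)
    · exact Or.inr (Or.inl ⟨⟨e1u, e2u⟩, hxu⟩)
    · exact absurd (hxu.symm.trans hxv') huv
    · exact Or.inr (Or.inr ⟨⟨e1v, e2v⟩, hxv⟩)
    · exact absurd (hxv.symm.trans hxu') (fun h => huv h.symm)
    · exact Or.inr (Or.inr ⟨⟨e1v, e2v⟩, hxv⟩)
  | or ψ₁ ψ₂ ih₁ ih₂ =>
    rintro x ⟨hx, hxF⟩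
    have hAB : ψ₁.app T ∪ ψ₂.app T ⊆ CubeP n :=
      Set.union_subset (app_subset_convex convex_CubeP hT ψ₁)
        (app_subset_convex convex_CubeP hT ψ₂)
    have hx2 := mem_convexHull_inter_face hAB hx hxF
    rw [Set.union_inter_distrib_right] at hx2
    have hx3 := convexHull_mono (Set.union_subset_union ih₁ ih₂) hx2
    refine ⟨hxF, ?_⟩
    by_cases hu' : ψ₁.eval u ∨ ψ₂.eval u <;> by_cases hv' : ψ₁.eval v ∨ ψ₂.eval v
    · exact Or.inl ⟨hu', hv'⟩
    · push_neg at hv'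
      have hsub : ({x | x ∈ Face σ ∧ ((ψ₁.eval u ∧ ψ₁.eval v) ∨ (ψ₁.eval u ∧ x = u) ∨
            (ψ₁.eval v ∧ x = v))} ∪
          {x | x ∈ Face σ ∧ ((ψ₂.eval u ∧ ψ₂.eval v) ∨ (ψ₂.eval u ∧ x = u) ∨
            (ψ₂.eval v ∧ x = v))}) ⊆ ({u} : Set (Fin n → ℝ)) := by
        rintro y (⟨-, ⟨-, h⟩ | ⟨-, rfl⟩ | ⟨h, -⟩⟩ | ⟨-, ⟨-, h⟩ | ⟨-, rfl⟩ | ⟨h, -⟩⟩)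
        exacts [absurd h hv'.1, rfl, absurd h hv'.1, absurd h hv'.2, rfl, absurd h hv'.2]
      have hxu := convexHull_mono hsub hx3
      rw [convexHull_singleton] at hxu
      exact Or.inr (Or.inl ⟨hu', hxu⟩)
    · push_neg at hu'
      have hsub : ({x | x ∈ Face σ ∧ ((ψ₁.eval u ∧ ψ₁.eval v) ∨ (ψ₁.eval u ∧ x = u) ∨
            (ψ₁.eval v ∧ x = v))} ∪
          {x | x ∈ Face σ ∧ ((ψ₂.eval u ∧ ψ₂.eval v) ∨ (ψ₂.eval u ∧ x = u) ∨
            (ψ₂.eval v ∧ x = v))}) ⊆ ({v} : Set (Fin n → ℝ)) := by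
        rintro y (⟨-, ⟨h, -⟩ | ⟨h, -⟩ | ⟨-, rfl⟩⟩ | ⟨-, ⟨h, -⟩ | ⟨h, -⟩ | ⟨-, rfl⟩⟩)
        exacts [absurd h hu'.1, absurd h hu'.1, rfl, absurd h hu'.2, absurd h hu'.2, rfl]
      have hxv := convexHull_mono hsub hx3
      rw [convexHull_singleton] at hxv
      exact Or.inr (Or.inr ⟨hv', hxv⟩)
    · push_neg at hu'
      push_neg at hv'
      exfalso
      have hsub : ({x | x ∈ Face σ ∧ ((ψ₁.eval u ∧ ψ₁.eval v) ∨ (ψ₁.eval u ∧ x = u) ∨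
            (ψ₁.eval v ∧ x = v))} ∪
          {x | x ∈ Face σ ∧ ((ψ₂.eval u ∧ ψ₂.eval v) ∨ (ψ₂.eval u ∧ x = u) ∨
            (ψ₂.eval v ∧ x = v))}) ⊆ (∅ : Set (Fin n → ℝ)) := by
        rintro y (⟨-, ⟨h, -⟩ | ⟨h, -⟩ | ⟨h, -⟩⟩ | ⟨-, ⟨h, -⟩ | ⟨h, -⟩ | ⟨h, -⟩⟩)
        exacts [absurd h hu'.1, absurd h hu'.1, absurd h hv'.1,
          absurd h hu'.2, absurd h hu'.2, absurd h hv'.2]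
      have hxe := convexHull_mono hsub hx3
      rw [convexHull_empty] at hxe
      exact hxe

/-- Main lemma: on a face with `d ≥ 1` free coordinates, `d` applications of `φ`
land inside the convex hull of the satisfying vertices on that face. -/
lemma main_lemma (φ : Fml n) (Q : Set (Fin n → ℝ)) (hQ : Q ⊆ CubeP n) :
    ∀ d, 1 ≤ d → ∀ σ : Fin n → Option Bool, (freeS σ).card = d →
      φ.iterApp d Q ∩ Face σ ⊆
        convexHull ℝ ({x ∈ CubeVerts n | φ.eval x} ∩ Face σ) := by
  intro d
  induction d with
  | zero => intro h; exact absurd h (by omega)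
  | succ d ih =>
    intro _ σ hcard
    rcases Nat.eq_zero_or_pos d with hd | hd
    · -- base case: exactly one free coordinate
      subst hd
      obtain ⟨j, hjset⟩ := Finset.card_eq_one.mp hcard
      have hj : σ j = none := by
        have hjm : j ∈ freeS σ := hjset ▸ Finset.mem_singleton_self j
        simpa [freeS] using hjm
      have hone : ∀ i, i ≠ j → σ i ≠ none := by
        intro i hij hnone
        have : i ∈ freeS σ := by simp [freeS, hnone]
        rw [hjset, Finset.mem_singleton] at this
        exact hij this
      set u : Fin n → ℝ := fun i => (σ i).elim 0 bval with hu_def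
      set v : Fin n → ℝ := fun i => (σ i).elim 1 bval with hv_def
      have huF : u ∈ Face σ := by
        constructor
        · intro i
          rcases h : σ i with _ | b
          · simp [hu_def, h]
          · simpa [hu_def, h] using ⟨bval_nonneg b, bval_le_one b⟩
        · intro i b h; simp [hu_def, h]
      have hvF : v ∈ Face σ := by
        constructor
        · intro i
          rcases h : σ i with _ | b
          · simp [hv_def, h]
          · simpa [hv_def, h] using ⟨bval_nonneg b, bval_le_one b⟩
        · intro i b h; simp [hv_def, h]
      have huj : u j = 0 := by simp [hu_def, hj]
      have hvj : v j = 1 := by simp [hv_def, hj]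
      have huv : u ≠ v := by
        intro h
        have := congrFun h j
        rw [huj, hvj] at this
        norm_num at this
      have huV : u ∈ CubeVerts n := by
        intro i
        rcases h : σ i with _ | b
        · left; simp [hu_def, h]
        · simpa [hu_def, h] using bval_01 b
      have hvV : v ∈ CubeVerts n := by
        intro i
        rcases h : σ i with _ | b
        · right; simp [hv_def, h]
        · simpa [hv_def, h] using bval_01 b
      have hequ : ∀ x ∈ Face σ, x j = 0 → x = u := by
        intro x hx hxj
        funext i
        by_cases hij : i = j
        · subst hij; rw [hxj, huj]
        · obtain ⟨b, hb⟩ := Option.ne_none_iff_exists'.mp (hone i hij)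
          rw [hx.2 i b hb]; simp [hu_def, hb]
      have heqv : ∀ x ∈ Face σ, x j = 1 → x = v := by
        intro x hx hxj
        funext i
        by_cases hij : i = j
        · subst hij; rw [hxj, hvj]
        · obtain ⟨b, hb⟩ := Option.ne_none_iff_exists'.mp (hone i hij)
          rw [hx.2 i b hb]; simp [hv_def, hb]
      intro x hx
      have hmem := oneD hone huF hvF huj hvj huv hequ heqv hQ φ ⟨hx.1, hx.2⟩
      rcases hmem.2 with ⟨hul, hvl⟩ | ⟨heu, hxu⟩ | ⟨hev, hxv⟩
      · have hxh := face_hull_aux 1 σ hcard hmem.1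
        refine convexHull_mono ?_ hxh
        rintro y ⟨hyF, hyV⟩
        rcases hyV j with h0 | h1
        · have : y = u := hequ y hyF h0
          subst this
          exact ⟨⟨huV, hul⟩, huF⟩
        · have : y = v := heqv y hyF h1
          subst this
          exact ⟨⟨hvV, hvl⟩, hvF⟩
      · rw [hxu]
        exact subset_convexHull ℝ _ ⟨⟨huV, heu⟩, huF⟩
      · rw [hxv]
        exact subset_convexHull ℝ _ ⟨⟨hvV, hev⟩, hvF⟩
    · -- inductive step: d ≥ 1
      by_cases hF : Forced φ σ
      · intro x hx
        have hxh := face_hull_aux _ σ rfl hx.2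
        refine convexHull_mono ?_ hxh
        rintro y ⟨hyF, hyV⟩
        exact ⟨⟨hyV, forced_eval hyF hF⟩, hyF⟩
      · intro x hx
        have hR : φ.iterApp d Q ⊆ CubeP n := iter_subset_convex convex_CubeP hQ φ d
        have hxh := inner_lemma hR hF ⟨hx.1, hx.2⟩
        refine convexHull_min ?_ (convex_convexHull ℝ _) hxh
        rintro y ⟨⟨hyR, hyF⟩, i, hiσ, hyi⟩
        obtain ⟨b, hyb⟩ : ∃ b : Bool, y i = bval b := by
          rcases hyi with h | h
          exacts [⟨false, by simpa using h⟩, ⟨true, by simpa using h⟩]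
        have hyF' : y ∈ Face (Function.update σ i (some b)) := by
          refine ⟨hyF.1, fun k bb hk => ?_⟩
          rcases eq_or_ne k i with rfl | hki
          · rw [Function.update_self] at hk
            injection hk with h; subst h
            exact hyb
          · exact hyF.2 k bb (by rwa [Function.update_of_ne hki] at hk)
        have hicard : (freeS (Function.update σ i (some b))).card = d := by
          rw [freeS_update, Finset.card_erase_of_mem (by simp [freeS, hiσ]), hcard]; omega
        have hy := ih hd _ hicard ⟨hyR, hyF'⟩
        refine convexHull_mono ?_ hy
        exact fun z hz => ⟨hz.1, face_update_subset hiσ b hz.2⟩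

end Stmt6Aux

theorem stmt6 {n : ℕ} (φ : Fml n) (S Q : Set (Fin n → ℝ))
    (hS : S = {x ∈ CubeVerts n | φ.eval x}) (hSne : S.Nonempty)
    (hQconv : Convex ℝ Q) (hQcube : Q ⊆ Set.Icc (0 : Fin n → ℝ) 1) (hSQ : S ⊆ Q) :
    φ.iterApp n Q = convexHull ℝ S := by
  rcases Nat.eq_zero_or_pos n with hn | hn
  · subst hn
    exact (fml_zero_false φ).elim
  · have hQ' : Q ⊆ CubeP n := by
      intro x hx i
      obtain ⟨h0, h1⟩ := hQcube hx
      exact ⟨by simpa using h0 i, by simpa using h1 i⟩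
    apply Set.Subset.antisymm
    · have hσ : (freeS (fun _ : Fin n => (none : Option Bool))).card = n := by
        simp [freeS]
      intro x hx
      have hxC : x ∈ CubeP n := iter_subset_convex convex_CubeP hQ' φ n hx
      have hxF : x ∈ Face (fun _ : Fin n => (none : Option Bool)) :=
        ⟨hxC, fun i b h => by simp at h⟩
      have hmain := main_lemma φ Q hQ' n hn _ hσ ⟨hx, hxF⟩
      rw [hS]
      exact convexHull_mono Set.inter_subset_left hmain
    · refine convexHull_min ?_ (iter_convex hQconv φ n)
      refine S_subset_iter φ hSQ ?_ n
      intro s hs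
      rw [hS] at hs
      exact hs.2
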